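/- Fix ε ∈ (0,1). Let Ã be a continuous linear operator on the complex Banach space C([log ε, 0], ℂ) of continuous complex-valued functions with the supremum norm, satisfying Ãh(s) = ∫_{log ε − s}^0 h(s+t) e^{t/2} dt + ∫_0^{−s} h(s+t) e^{t/2} dt for all h and s ∈ [log ε, 0]. Then the spectral radius of Ã equals log(1/ε). -/

import Mathlib

open MeasureTheory

lemma aux_integ (L : ℝ) (hL : L ≤ 0) (h : C(Set.Icc L (0:ℝ), ℂ)) :
    Continuous fun u : ℝ => h (Set.projIcc L 0 hL u) * (Real.exp (u/2) : ℂ) := by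
  exact (h.continuous.comp continuous_projIcc).mul
    (Complex.continuous_ofReal.comp (Real.continuous_exp.comp (continuous_id.div_const 2)))

lemma aux_key (L : ℝ) (hL : L ≤ 0)
    (h : C(Set.Icc L (0:ℝ), ℂ)) (s : Set.Icc L (0:ℝ)) :
    ((∫ t in (L - s.1)..(0:ℝ), h (Set.projIcc L 0 hL (s.1 + t)) * (Real.exp (t/2) : ℂ))
      + ∫ t in (0:ℝ)..(-s.1), h (Set.projIcc L 0 hL (s.1 + t)) * (Real.exp (t/2) : ℂ))
    = (∫ u in L..(0:ℝ), h (Set.projIcc L 0 hL u) * (Real.exp (u/2) : ℂ))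
        * (Real.exp (-s.1/2) : ℂ) := by
  set F : ℝ → ℂ := fun u => h (Set.projIcc L 0 hL u) * (Real.exp (u/2) : ℂ) with hF
  have hFc : Continuous F := aux_integ L hL h
  have hpt : ∀ t : ℝ, h (Set.projIcc L 0 hL (s.1 + t)) * (Real.exp (t/2) : ℂ)
      = F (s.1 + t) * (Real.exp (-s.1/2) : ℂ) := by
    intro t
    simp only [hF]
    rw [mul_assoc, ← Complex.ofReal_mul, ← Real.exp_add,
      show (s.1 + t)/2 + -s.1/2 = t/2 by ring]
  simp only [hpt]
  rw [intervalIntegral.integral_mul_const, intervalIntegral.integral_mul_const, ← add_mul,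
    intervalIntegral.integral_comp_add_left F, intervalIntegral.integral_comp_add_left F,
    show s.1 + (L - s.1) = L by ring, show s.1 + (0:ℝ) = s.1 by ring,
    show s.1 + -s.1 = (0:ℝ) by ring,
    intervalIntegral.integral_add_adjacent_intervals (hFc.intervalIntegrable _ _)
      (hFc.intervalIntegrable _ _)]


set_option linter.unreachableTactic false in
set_option maxHeartbeats 1000000 in
set_option synthInstance.maxHeartbeats 400000 in
/-- For `ε ∈ (0,1)` and the operator `Ã` on the complex Banach space
`C([log ε, 0], ℂ)` given by
`Ãh(s) = ∫_{log ε − s}^0 h(s+t) e^{t/2} dt + ∫_0^{−s} h(s+t) e^{t/2} dt`,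
the spectral radius of `Ã` equals `log(1/ε)`. -/
theorem spectralRadius_of_simple_operator (ε : ℝ) (hε : ε ∈ Set.Ioo (0 : ℝ) 1)
    (A : C(Set.Icc (Real.log ε) (0 : ℝ), ℂ) →L[ℂ] C(Set.Icc (Real.log ε) (0 : ℝ), ℂ))
    (hA : ∀ (h : C(Set.Icc (Real.log ε) (0 : ℝ), ℂ)) (s : Set.Icc (Real.log ε) (0 : ℝ)),
      A h s =
        (∫ t in (Real.log ε - s.1)..(0 : ℝ),
          h (Set.projIcc (Real.log ε) 0 (Real.log_nonpos hε.1.le hε.2.le) (s.1 + t))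
            * (Real.exp (t / 2) : ℂ))
        + ∫ t in (0 : ℝ)..(-s.1),
          h (Set.projIcc (Real.log ε) 0 (Real.log_nonpos hε.1.le hε.2.le) (s.1 + t))
            * (Real.exp (t / 2) : ℂ)) :
    spectralRadius ℂ A = ENNReal.ofReal (Real.log (1 / ε)) := by
  have hL : Real.log ε ≤ 0 := Real.log_nonpos hε.1.le hε.2.le
  have hLneg : Real.log ε < 0 := Real.log_neg hε.1 hε.2
  have hgoal : Real.log (1 / ε) = -Real.log ε := by rw [one_div, Real.log_inv]
  set c : C(Set.Icc (Real.log ε) (0:ℝ), ℂ) → ℂ :=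
    fun h => ∫ u in (Real.log ε)..(0:ℝ),
      h (Set.projIcc (Real.log ε) 0 hL u) * (Real.exp (u/2) : ℂ) with hc
  have hφc : Continuous fun s : Set.Icc (Real.log ε) (0:ℝ) =>
      ((Real.exp (-s.1/2) : ℝ) : ℂ) :=
    Complex.continuous_ofReal.comp
      (Real.continuous_exp.comp ((continuous_subtype_val.neg).div_const 2))
  set φ : C(Set.Icc (Real.log ε) (0:ℝ), ℂ) := ⟨_, hφc⟩ with hφ
  have key : ∀ h, A h = c h • φ := by
    intro h
    ext s
    rw [hA h s, aux_key (Real.log ε) hL h s]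
    simp [hφ, hc, mul_comm]
  have hcφ : c φ = (-Real.log ε : ℂ) := by
    have hpt : ∀ u ∈ Set.uIcc (Real.log ε) (0:ℝ),
        φ (Set.projIcc (Real.log ε) 0 hL u) * (Real.exp (u/2) : ℂ) = 1 := by
      intro u hu
      rw [Set.uIcc_of_le hL] at hu
      rw [Set.projIcc_of_mem hL hu]
      simp only [hφ, ContinuousMap.coe_mk]
      rw [← Complex.ofReal_mul, ← Real.exp_add, show -u/2 + u/2 = 0 by ring]
      simp
    simp only [hc]
    rw [intervalIntegral.integral_congr hpt]
    simp
  have hAφ : A φ = (-Real.log ε : ℂ) • φ := by rw [key φ, hcφ]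
  have hφ0 : φ ≠ 0 := by
    intro h0
    have := DFunLike.congr_fun h0 ⟨0, by constructor <;> simp [hL]⟩
    simp [hφ] at this
  have hl0 : (-Real.log ε : ℂ) ≠ 0 := by
    simp only [ne_eq, neg_eq_zero, Complex.ofReal_eq_zero]
    exact hLneg.ne
  have hA2 : A * A = (-Real.log ε : ℂ) • A := by
    ext1 h
    rw [ContinuousLinearMap.mul_apply, key h, A.map_smul, hAφ, ContinuousLinearMap.smul_apply,
      key h, smul_smul, smul_smul, mul_comm]
  have hmem : (-Real.log ε : ℂ) ∈ spectrum ℂ A := by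
    rw [spectrum.mem_iff]
    intro hunit
    obtain ⟨u, hu⟩ := hunit
    have hker : (algebraMap ℂ _ (-Real.log ε : ℂ) - A) φ = 0 := by
      rw [Algebra.algebraMap_eq_smul_one]
      rw [ContinuousLinearMap.sub_apply, ContinuousLinearMap.smul_apply,
        ContinuousLinearMap.one_apply, hAφ, sub_self]
    apply hφ0
    have h2 := congrArg
      (fun T : C(Set.Icc (Real.log ε) (0:ℝ), ℂ) →L[ℂ] C(Set.Icc (Real.log ε) (0:ℝ), ℂ) => T φ)
      u.inv_mul
    rw [hu, ContinuousLinearMap.mul_apply, hker, map_zero, ContinuousLinearMap.one_apply] at h2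
    exact h2.symm
  have hsub : ∀ μ : ℂ, μ ∈ spectrum ℂ A → μ = 0 ∨ μ = (-Real.log ε : ℂ) := by
    intro μ hμ
    by_contra hcon
    push_neg at hcon
    obtain ⟨hm0, hml⟩ := hcon
    have hd : μ - (-Real.log ε : ℂ) ≠ 0 := sub_ne_zero.mpr hml
    have hd' : μ + (Real.log ε : ℂ) ≠ 0 := by rwa [sub_neg_eq_add] at hd
    set B : C(Set.Icc (Real.log ε) (0:ℝ), ℂ) →L[ℂ] C(Set.Icc (Real.log ε) (0:ℝ), ℂ) :=
      μ⁻¹ • (1 + (μ - (-Real.log ε : ℂ))⁻¹ • A) with hB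
    have hAA : ∀ h, A (A h) = (-Real.log ε : ℂ) • A h := fun h => by
      rw [← ContinuousLinearMap.mul_apply, hA2, ContinuousLinearMap.smul_apply]
    have hmul : (algebraMap ℂ _ μ - A) * B = 1 := by
      ext1 h
      simp only [hB, Algebra.algebraMap_eq_smul_one, ContinuousLinearMap.mul_apply,
        ContinuousLinearMap.sub_apply, ContinuousLinearMap.smul_apply,
        ContinuousLinearMap.add_apply, ContinuousLinearMap.one_apply, map_add, A.map_smul,
        hAA h]
      match_scalars <;> field_simp <;> ring
    have hmul' : B * (algebraMap ℂ _ μ - A) = 1 := by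
      ext1 h
      simp only [hB, Algebra.algebraMap_eq_smul_one, ContinuousLinearMap.mul_apply,
        ContinuousLinearMap.sub_apply, ContinuousLinearMap.smul_apply,
        ContinuousLinearMap.add_apply, ContinuousLinearMap.one_apply, map_sub, map_add,
        A.map_smul, hAA h]
      match_scalars <;> field_simp <;> ring
    have : IsUnit (algebraMap ℂ _ μ - A) := ⟨⟨_, B, hmul, hmul'⟩, rfl⟩
    exact (spectrum.mem_iff.mp hμ) this
  rw [spectralRadius]
  have hnorm : (‖(-Real.log ε : ℂ)‖₊ : ENNReal) = ENNReal.ofReal (Real.log (1 / ε)) := by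
    rw [hgoal, ← enorm_eq_nnnorm, ← ofReal_norm]
    congr 1
    rw [norm_neg, Complex.norm_real, Real.norm_eq_abs, abs_of_nonpos hL]
  apply le_antisymm
  · refine iSup₂_le fun μ hμ => ?_
    rcases hsub μ hμ with h | h
    · simp [h]
    · rw [h, hnorm]
  · rw [← hnorm]
    exact le_iSup₂ (f := fun k (_ : k ∈ spectrum ℂ A) => (‖k‖₊ : ENNReal)) (-Real.log ε : ℂ) hmem
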